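/- Let S, I, R, B : [0,∞) → ℝ be a solution of the SIRB system S' = −βSI, I' = βSI − γI + βσαIR, R' = γI − βσIR, B' = βσ(1−α)IR with β>0, γ>0, σ>0, 0<α<1, initial conditions S(0)>0, I(0)>0, R(0)≥0 with (σβ/γ)·R(0) < 1, B(0)≥0, S(0)+I(0)+R(0)+B(0)=1, and suppose S(t)>0 and I(t)>0 for all t≥0. Then for every t ≥ 0: B(t) = B(0) − (1 − α)·[(γ/(σβ))·ln((1 − (σβ/γ)R(t))/(1 − (σβ/γ)R(0))) + (R(t) − R(0))]. -/

import Mathlib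

/-- Explicit solution for `B`:
`B t = B 0 − (1 − α)[(γ/(σβ)) ln((1 − (σβ/γ)R t)/(1 − (σβ/γ)R 0)) + (R t − R 0)]`. -/
theorem sirb_explicit_B (β γ σ α : ℝ) (S I R B : ℝ → ℝ)
    (hβ : 0 < β) (hγ : 0 < γ) (hσ : 0 < σ) (hα0 : 0 < α) (hα1 : α < 1)
    (hS' : ∀ t : ℝ, 0 ≤ t → HasDerivAt S (-(β * S t * I t)) t)
    (hI' : ∀ t : ℝ, 0 ≤ t → HasDerivAt I (β * S t * I t - γ * I t + β * σ * α * I t * R t) t)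
    (hR' : ∀ t : ℝ, 0 ≤ t → HasDerivAt R (γ * I t - β * σ * I t * R t) t)
    (hB' : ∀ t : ℝ, 0 ≤ t → HasDerivAt B (β * σ * (1 - α) * I t * R t) t)
    (hS0 : 0 < S 0) (hI0 : 0 < I 0) (hR0 : 0 ≤ R 0) (hB0 : 0 ≤ B 0)
    (hsum : S 0 + I 0 + R 0 + B 0 = 1)
    (hSpos : ∀ t : ℝ, 0 ≤ t → 0 < S t) (hIpos : ∀ t : ℝ, 0 ≤ t → 0 < I t)
    (hR0lt1 : σ * β / γ * R 0 < 1) :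
    ∀ t : ℝ, 0 ≤ t →
      B t = B 0
        - (1 - α) * (γ / (σ * β) * Real.log ((1 - σ * β / γ * R t) / (1 - σ * β / γ * R 0))
          + (R t - R 0)) := by
  have hβ' := hβ.ne'
  have hγ' := hγ.ne'
  have hσ' := hσ.ne'
  set c : ℝ := σ * β / γ with hc_def
  have hc : 0 < c := by positivity
  set u : ℝ → ℝ := fun t => 1 - c * R t with hu_def
  -- derivative of u
  have hu' : ∀ t : ℝ, 0 ≤ t → HasDerivAt u (-(c * γ * I t) * u t) t := by
    intro t ht
    have h := ((hR' t ht).const_mul c).const_sub 1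
    convert h using 1
    case e'_4 => rfl
    case e'_5 => rfl
    simp only [hu_def, hc_def]
    field_simp
  -- modified integrand, continuous on all of ℝ
  set f : ℝ → ℝ := fun s => c * γ * I (max s 0) with hf_def
  have hf_cont : Continuous f := by
    rw [continuous_iff_continuousAt]
    intro s
    have h1 : ContinuousAt I (max s 0) := (hI' _ (le_max_right s 0)).continuousAt
    have h2 : ContinuousAt (fun s : ℝ => max s 0) s :=
      (continuous_id.max continuous_const).continuousAt
    have h3 : ContinuousAt (I ∘ fun s : ℝ => max s 0) s := ContinuousAt.comp (f := fun s : ℝ => max s 0) h1 h2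
    exact continuousAt_const.mul h3
  set J : ℝ → ℝ := fun t => ∫ s in (0:ℝ)..t, f s with hJ_def
  have hJ' : ∀ t : ℝ, HasDerivAt J (f t) t := fun t =>
    (hf_cont.integral_hasStrictDerivAt 0 t).hasDerivAt
  have hJ0 : J 0 = 0 := intervalIntegral.integral_same
  -- g = u * exp J has zero derivative on [0,∞)
  set g : ℝ → ℝ := fun t => u t * Real.exp (J t) with hg_def
  have hg' : ∀ t : ℝ, 0 ≤ t → HasDerivAt g 0 t := by
    intro t ht
    have h := (hu' t ht).mul ((hJ' t).exp)
    have hft : f t = c * γ * I t := by simp [hf_def, max_eq_left ht]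
    convert h using 1
    case e'_4 => rfl
    case e'_5 => rfl
    case e'_8 => rfl
    rw [hft]
    ring
  -- constancy of g on [0, T]
  have hg_const : ∀ T : ℝ, 0 ≤ T → g T = g 0 := by
    intro T hT
    have hcont : ContinuousOn g (Set.Icc 0 T) := fun x hx =>
      ((hg' x hx.1).continuousAt).continuousWithinAt
    have hderiv : ∀ x ∈ Set.Ico (0:ℝ) T, HasDerivWithinAt g 0 (Set.Ici x) x := fun x hx =>
      (hg' x hx.1).hasDerivWithinAt
    exact constant_of_has_deriv_right_zero hcont hderiv T (Set.mem_Icc.mpr ⟨hT, le_refl T⟩)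
  have hu0_pos : 0 < u 0 := by simpa [hu_def] using sub_pos.mpr hR0lt1
  have hu_pos : ∀ t : ℝ, 0 ≤ t → 0 < u t := by
    intro t ht
    have h := hg_const t ht
    have : u t * Real.exp (J t) = u 0 * Real.exp (J 0) := h
    have hpos : 0 < u t * Real.exp (J t) := by
      rw [this]; positivity
    nlinarith [Real.exp_pos (J t)]
  -- conserved quantity
  set G : ℝ → ℝ := fun t => B t + (1 - α) * (γ / (σ * β) * Real.log (u t) + R t) with hG_def
  have hG' : ∀ t : ℝ, 0 ≤ t → HasDerivAt G 0 t := by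
    intro t ht
    have hut : u t ≠ 0 := (hu_pos t ht).ne'
    have hlog : HasDerivAt (fun t => Real.log (u t)) (-(c * γ * I t) * u t / u t) t :=
      (hu' t ht).log hut
    have h := (hB' t ht).add
      ((((hlog.const_mul (γ / (σ * β)))).add (hR' t ht)).const_mul (1 - α))
    convert h using 1
    case e'_4 => rfl
    case e'_5 => rfl
    case e'_8 => rfl
    rw [mul_div_assoc, div_self hut]
    simp only [hc_def]
    field_simp
    ring
  have hG_const : ∀ T : ℝ, 0 ≤ T → G T = G 0 := by
    intro T hT
    have hcont : ContinuousOn G (Set.Icc 0 T) := fun x hx =>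
      ((hG' x hx.1).continuousAt).continuousWithinAt
    have hderiv : ∀ x ∈ Set.Ico (0:ℝ) T, HasDerivWithinAt G 0 (Set.Ici x) x := fun x hx =>
      (hG' x hx.1).hasDerivWithinAt
    exact constant_of_has_deriv_right_zero hcont hderiv T (Set.mem_Icc.mpr ⟨hT, le_refl T⟩)
  intro t ht
  have hG := hG_const t ht
  have hlogdiv : Real.log (u t / u 0) = Real.log (u t) - Real.log (u 0) :=
    Real.log_div (hu_pos t ht).ne' hu0_pos.ne'
  have hut : u t = 1 - σ * β / γ * R t := rfl
  have hu0 : u 0 = 1 - σ * β / γ * R 0 := rfl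
  rw [← hut, ← hu0, hlogdiv]
  simp only [hG_def] at hG
  linarith [hG]
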